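/- Let 0 ≤ α < 1 and let f(z) = z + a_2 z² + a_3 z³ + ⋯ be holomorphic on the unit disk D with f'(z) ≠ 0 on D, satisfying Re(1 + z f''(z)/f'(z)) ≥ α for all z ∈ D (f is convex of order α). Then |a_3 - (2/3) a_2²| ≤ (1-α)/3. -/

import Mathlib

open Complex Metric Set intervalIntegral MeasureTheory

private lemma intervalIntegral_conj {g : ℝ → ℂ} {a b : ℝ} (hab : a ≤ b) :
    (∫ θ in a..b, (starRingEnd ℂ) (g θ)) = (starRingEnd ℂ) (∫ θ in a..b, g θ) := by
  rw [intervalIntegral.integral_of_le hab, intervalIntegral.integral_of_le hab, integral_conj]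

private lemma cara_aux (p : ℂ → ℂ) (r : NNReal) (hr0 : 0 < (r:ℝ)) (hr1 : (r:ℝ) < 1)
    (hd : DifferentiableOn ℂ p (ball 0 1))
    (hre : ∀ z ∈ ball (0:ℂ) 1, 0 ≤ (p z).re) :
    ‖iteratedDeriv 2 p 0‖ * (r:ℝ)^2 ≤ 4 * (p 0).re := by
  have hrC : ((r:ℝ):ℂ) ≠ 0 := by exact_mod_cast hr0.ne'
  set u : ℝ → ℂ := fun θ => p (circleMap 0 r θ) with hu
  have hmem : ∀ θ : ℝ, circleMap 0 (r:ℝ) θ ∈ ball (0:ℂ) 1 := by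
    intro θ
    rw [mem_ball, dist_zero_right]
    calc ‖circleMap 0 (r:ℝ) θ‖ = ‖circleMap 0 (r:ℝ) θ‖ := rfl
      _ = |(r:ℝ)| := norm_circleMap_zero _ _
      _ < 1 := by rwa [abs_of_pos hr0]
  have hucont : Continuous u :=
    hd.continuousOn.comp_continuous (continuous_circleMap 0 (r:ℝ)) hmem
  have hsub : closedBall (0:ℂ) (r:ℝ) ⊆ ball 0 1 := closedBall_subset_ball hr1
  have hdr : DifferentiableOn ℂ p (closedBall 0 (r:ℝ)) := hd.mono hsub
  have H : HasFPowerSeriesOnBall p (cauchyPowerSeries p 0 (r:ℝ)) 0 r :=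
    hdr.hasFPowerSeriesOnBall (by exact_mod_cast hr0)
  have hne : ∀ θ : ℝ, circleMap 0 (r:ℝ) θ ≠ 0 := fun θ =>
    circleMap_ne_center (by exact_mod_cast hr0.ne')
  have hexp_ne : ∀ θ : ℝ, Complex.exp (θ*I) ≠ 0 := fun θ => Complex.exp_ne_zero _
  set K := ∫ θ in (0:ℝ)..2*Real.pi, (Complex.exp (θ*I))⁻¹^2 * u θ with hK
  set L := ∫ θ in (0:ℝ)..2*Real.pi, Complex.exp (θ*I)^2 * u θ with hL
  -- derivative = 2 * second cauchy coefficient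
  have hD : iteratedDeriv 2 p 0 = 2 * (cauchyPowerSeries p 0 (r:ℝ) 2 fun _ => (1:ℂ)) := by
    have h2 := H.factorial_smul (1:ℂ) 2
    rw [iteratedDeriv_eq_iteratedFDeriv, ← h2]
    simp [Nat.factorial]
  -- Cauchy coefficient as interval integral
  have hA : (cauchyPowerSeries p 0 (r:ℝ) 2 fun _ => (1:ℂ))
      = (2*(Real.pi:ℂ)*I)⁻¹ * (I * ((r:ℝ):ℂ)⁻¹^2 * K) := by
    rw [cauchyPowerSeries_apply, smul_eq_mul]
    congr 1
    rw [circleIntegral, hK, ← intervalIntegral.integral_const_mul]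
    refine intervalIntegral.integral_congr fun θ _ => ?_
    have hc := hne θ
    have he := hexp_ne θ
    simp only [hu, deriv_circleMap, smul_eq_mul, sub_zero, circleMap_zero]
    field_simp
  have hD2 : iteratedDeriv 2 p 0 = ((Real.pi:ℂ))⁻¹ * ((r:ℝ):ℂ)⁻¹^2 * K := by
    have hπ : ((Real.pi:ℝ):ℂ) ≠ 0 := by exact_mod_cast Real.pi_ne_zero
    rw [hD, hA]
    field_simp
  -- L = 0
  have hL0 : L = 0 := by
    have h1 : (∮ z in C(0, (r:ℝ)), z * p z) = 0 := by
      refine Complex.circleIntegral_eq_zero_of_differentiable_on_off_countable hr0.le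
        countable_empty (continuousOn_id.mul hdr.continuousOn) fun z hz => ?_
      exact differentiableAt_id.mul
        ((hd.analyticAt (isOpen_ball.mem_nhds (ball_subset_ball hr1.le hz.1))).differentiableAt)
    have h2 : (∮ z in C(0,(r:ℝ)), z * p z) = I * ((r:ℝ):ℂ)^2 * L := by
      rw [circleIntegral, hL, ← intervalIntegral.integral_const_mul]
      refine intervalIntegral.integral_congr fun θ _ => ?_
      simp only [hu, deriv_circleMap, smul_eq_mul, circleMap_zero]
      ring
    rw [h2] at h1
    have hIr : I * ((r:ℝ):ℂ)^2 ≠ 0 := mul_ne_zero Complex.I_ne_zero (pow_ne_zero _ hrC)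
    exact (mul_eq_zero.mp h1).resolve_left hIr
  -- mean value
  have hM : (∫ θ in (0:ℝ)..2*Real.pi, u θ) = 2*(Real.pi:ℂ)*(p 0) := by
    have h1 : (∮ z in C(0,(r:ℝ)), (z - 0)⁻¹ • p z) = (2*(Real.pi:ℂ)*I) • p 0 :=
      hdr.circleIntegral_sub_inv_smul (mem_ball_self hr0)
    have h2 : (∮ z in C(0,(r:ℝ)), (z - 0)⁻¹ • p z) = I * ∫ θ in (0:ℝ)..2*Real.pi, u θ := by
      rw [circleIntegral, ← intervalIntegral.integral_const_mul]
      refine intervalIntegral.integral_congr fun θ _ => ?_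
      have hc := hne θ
      simp only [hu, deriv_circleMap, smul_eq_mul, sub_zero]
      field_simp
    rw [h2, smul_eq_mul] at h1
    apply mul_left_cancel₀ Complex.I_ne_zero
    rw [h1]; ring
  -- continuity of integrands
  have hexpc : Continuous fun θ:ℝ => Complex.exp (θ*I) :=
    Complex.continuous_exp.comp (Complex.continuous_ofReal.mul continuous_const)
  have hcont1 : Continuous fun θ:ℝ => (Complex.exp (θ*I))⁻¹^2 * u θ :=
    ((hexpc.inv₀ hexp_ne).pow 2).mul hucont
  have hcont2 : Continuous fun θ:ℝ => (starRingEnd ℂ) (Complex.exp (θ*I)^2 * u θ) :=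
    Complex.continuous_conj.comp ((hexpc.pow 2).mul hucont)
  -- rewrite K using the real part
  have hKey : K = ∫ θ in (0:ℝ)..2*Real.pi,
      (Complex.exp (θ*I))⁻¹^2 * (u θ + (starRingEnd ℂ) (u θ)) := by
    have expand : ∀ θ:ℝ, (Complex.exp (θ*I))⁻¹^2 * (u θ + (starRingEnd ℂ) (u θ))
        = (Complex.exp (θ*I))⁻¹^2 * u θ + (starRingEnd ℂ) (Complex.exp (θ*I)^2 * u θ) := by
      intro θ
      have h1 : (starRingEnd ℂ) (Complex.exp (θ*I)) = (Complex.exp (θ*I))⁻¹ := by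
        rw [← Complex.exp_conj, ← Complex.exp_neg]
        congr 1
        simp
      rw [map_mul, map_pow, h1]
      ring
    calc K = K + (starRingEnd ℂ) L := by rw [hL0, map_zero, add_zero]
    _ = ∫ θ in (0:ℝ)..2*Real.pi,
        ((Complex.exp (θ*I))⁻¹^2 * u θ + (starRingEnd ℂ) (Complex.exp (θ*I)^2 * u θ)) := by
      rw [hK, hL, ← intervalIntegral_conj Real.two_pi_pos.le,
        ← intervalIntegral.integral_add (hcont1.intervalIntegrable _ _)
          (hcont2.intervalIntegrable _ _)]
    _ = _ := intervalIntegral.integral_congr fun θ _ => (expand θ).symm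
  have hre' : ∀ θ:ℝ, 0 ≤ (u θ).re := fun θ => hre _ (hmem θ)
  have hnormint : ∀ θ:ℝ,
      ‖(Complex.exp (θ*I))⁻¹^2 * (u θ + (starRingEnd ℂ) (u θ))‖ = 2 * (u θ).re := by
    intro θ
    rw [norm_mul, norm_pow, norm_inv]
    have h1 : ‖Complex.exp (θ*I)‖ = 1 := by
      rw [Complex.norm_exp]
      simp
    rw [h1, Complex.add_conj]
    simp only [inv_one, one_pow, one_mul, Complex.norm_real, Real.norm_eq_abs]
    exact abs_of_nonneg (by have := hre' θ; linarith)
  have hintre : (∫ θ in (0:ℝ)..2*Real.pi, u θ).re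
      = ∫ θ in (0:ℝ)..2*Real.pi, (u θ).re := by
    rw [intervalIntegral.integral_of_le Real.two_pi_pos.le,
      intervalIntegral.integral_of_le Real.two_pi_pos.le]
    have := integral_re (μ := volume.restrict (Ioc 0 (2*Real.pi))) (hucont.integrableOn_Ioc)
    simpa using this.symm
  have hKbound : ‖K‖ ≤ 4*Real.pi*(p 0).re := by
    rw [hKey]
    calc ‖∫ θ in (0:ℝ)..2*Real.pi, (Complex.exp (θ*I))⁻¹^2 * (u θ + (starRingEnd ℂ) (u θ))‖
        ≤ ∫ θ in (0:ℝ)..2*Real.pi,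
          ‖(Complex.exp (θ*I))⁻¹^2 * (u θ + (starRingEnd ℂ) (u θ))‖ :=
          intervalIntegral.norm_integral_le_integral_norm Real.two_pi_pos.le
    _ = ∫ θ in (0:ℝ)..2*Real.pi, 2*(u θ).re :=
          intervalIntegral.integral_congr fun θ _ => hnormint θ
    _ = 2 * ∫ θ in (0:ℝ)..2*Real.pi, (u θ).re := by
          rw [← intervalIntegral.integral_const_mul]
    _ = 2 * (∫ θ in (0:ℝ)..2*Real.pi, u θ).re := by rw [hintre]
    _ = 4*Real.pi*(p 0).re := by
          rw [hM]
          have : 2*(Real.pi:ℂ)*(p 0) = ((2*Real.pi : ℝ):ℂ) * p 0 := by push_cast; ring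
          rw [this, Complex.re_ofReal_mul]
          ring
  have habs : ‖iteratedDeriv 2 p 0‖
      = (Real.pi)⁻¹ * ((r:ℝ)⁻¹^2) * ‖K‖ := by
    rw [hD2]
    rw [norm_mul, norm_mul, norm_inv, norm_pow, norm_inv]
    rw [Complex.norm_of_nonneg Real.pi_pos.le, Complex.norm_of_nonneg hr0.le]
  have hcancel : (Real.pi)⁻¹ * ((r:ℝ)⁻¹^2) * ‖K‖ * (r:ℝ)^2
      = (Real.pi)⁻¹ * ‖K‖ := by
    field_simp
  rw [habs, hcancel]
  calc (Real.pi)⁻¹ * ‖K‖ ≤ (Real.pi)⁻¹ * (4*Real.pi*(p 0).re) :=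
        mul_le_mul_of_nonneg_left hKbound (inv_nonneg.mpr Real.pi_pos.le)
  _ = 4*(p 0).re := by
        field_simp

lemma cara2 (p : ℂ → ℂ) (hd : DifferentiableOn ℂ p (ball 0 1))
    (hre : ∀ z ∈ ball (0:ℂ) 1, 0 ≤ (p z).re) :
    ‖iteratedDeriv 2 p 0‖ ≤ 4 * (p 0).re := by
  have key : ∀ r : ℝ, r ∈ Ioo (0:ℝ) 1 →
      ‖iteratedDeriv 2 p 0‖ * r^2 ≤ 4 * (p 0).re := by
    intro r hr
    have := cara_aux p r.toNNReal (by simp [Real.coe_toNNReal _ hr.1.le, hr.1])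
      (by simp [Real.coe_toNNReal _ hr.1.le, hr.2]) hd hre
    rwa [Real.coe_toNNReal _ hr.1.le] at this
  have htend : Filter.Tendsto (fun r : ℝ => ‖iteratedDeriv 2 p 0‖ * r^2)
      (nhdsWithin 1 (Iio (1:ℝ))) (nhds (‖iteratedDeriv 2 p 0‖)) := by
    have : Filter.Tendsto (fun r : ℝ => ‖iteratedDeriv 2 p 0‖ * r^2)
        (nhds 1) (nhds (‖iteratedDeriv 2 p 0‖ * 1^2)) := by
      exact (continuous_const.mul (continuous_pow 2)).tendsto 1
    simpa using this.mono_left nhdsWithin_le_nhds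
  refine le_of_tendsto htend ?_
  filter_upwards [Ioo_mem_nhdsLT_of_mem (show (1:ℝ) ∈ Ioc 0 1 by norm_num)] with r hr
  exact key r hr

theorem stmt_6 (α : ℝ) (hα0 : 0 ≤ α) (hα1 : α < 1)
    (f : ℂ → ℂ) (hf : DifferentiableOn ℂ f (ball (0:ℂ) 1))
    (h0 : f 0 = 0) (h1 : deriv f 0 = 1)
    (hf' : ∀ z ∈ ball (0:ℂ) 1, deriv f z ≠ 0)
    (a : ℕ → ℂ) (ha : ∀ n, a n = iteratedDeriv n f 0 / (Nat.factorial n))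
    (hconv : ∀ z ∈ ball (0:ℂ) 1,
      α ≤ (1 + z * iteratedDeriv 2 f z / deriv f z).re) :
    ‖a 3 - (2/3 : ℂ) * a 2 ^ 2‖ ≤ (1 - α) / 3 := by
  set F1 := deriv f with hF1def
  set F2 := deriv F1 with hF2def
  set F3 := deriv F2 with hF3def
  have h0mem : (0:ℂ) ∈ ball (0:ℂ) 1 := mem_ball_self one_pos
  have hfa : AnalyticOnNhd ℂ f (ball 0 1) := hf.analyticOnNhd isOpen_ball
  have hA1 : AnalyticOnNhd ℂ F1 (ball 0 1) := hfa.deriv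
  have hA2 : AnalyticOnNhd ℂ F2 (ball 0 1) := hA1.deriv
  have hA3 : AnalyticOnNhd ℂ F3 (ball 0 1) := hA2.deriv
  have hi2 : iteratedDeriv 2 f = F2 := by
    rw [iteratedDeriv_succ, iteratedDeriv_one]
  have hi3 : iteratedDeriv 3 f = F3 := by
    rw [iteratedDeriv_succ, iteratedDeriv_succ, iteratedDeriv_one]
  simp only [hi2] at hconv
  set p : ℂ → ℂ := fun z => 1 + z * F2 z / F1 z - (α:ℂ) with hp
  -- derivative of p on the ball
  have hG : ∀ z ∈ ball (0:ℂ) 1, HasDerivAt p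
      (((1 * F2 z + z * F3 z) * F1 z - z * F2 z * F2 z) / (F1 z)^2) z := by
    intro z hz
    have d1 : HasDerivAt F1 (F2 z) z := ((hA1 z hz).differentiableAt).hasDerivAt
    have d2 : HasDerivAt F2 (F3 z) z := ((hA2 z hz).differentiableAt).hasDerivAt
    have dnum : HasDerivAt (fun w => w * F2 w) (1 * F2 z + z * F3 z) z :=
      (hasDerivAt_id z).mul d2
    have dq := dnum.div d1 (hf' z hz)
    exact (dq.const_add 1).sub_const (α:ℂ)
  have hdp : DifferentiableOn ℂ p (ball 0 1) :=
    fun z hz => ((hG z hz).differentiableAt).differentiableWithinAt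
  have hrep : ∀ z ∈ ball (0:ℂ) 1, 0 ≤ (p z).re := by
    intro z hz
    have := hconv z hz
    simp only [hp, Complex.sub_re, Complex.ofReal_re]
    linarith
  -- second derivative of p at 0
  have hIter : iteratedDeriv 2 p 0
      = deriv (fun z => ((1 * F2 z + z * F3 z) * F1 z - z * F2 z * F2 z) / (F1 z)^2) 0 := by
    rw [iteratedDeriv_succ, iteratedDeriv_one]
    apply Filter.EventuallyEq.deriv_eq
    filter_upwards [isOpen_ball.mem_nhds h0mem] with z hz
    exact (hG z hz).deriv
  have d1 : HasDerivAt F1 (F2 0) 0 := ((hA1 0 h0mem).differentiableAt).hasDerivAt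
  have d2 : HasDerivAt F2 (F3 0) 0 := ((hA2 0 h0mem).differentiableAt).hasDerivAt
  have d3 : HasDerivAt F3 (deriv F3 0) 0 := ((hA3 0 h0mem).differentiableAt).hasDerivAt
  have hF10 : F1 0 = 1 := h1
  have dG : HasDerivAt
      (fun z => ((1 * F2 z + z * F3 z) * F1 z - z * F2 z * F2 z) / (F1 z)^2)
      (2 * F3 0 - 2 * (F2 0)^2) 0 := by
    have dnum : HasDerivAt (fun z => (1 * F2 z + z * F3 z) * F1 z - z * F2 z * F2 z)
        (((1 * F3 0 + (1 * F3 0 + 0 * deriv F3 0)) * F1 0 + (1 * F2 0 + 0 * F3 0) * F2 0)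
          - ((1 * F2 0 + 0 * F3 0) * F2 0 + 0 * F2 0 * F3 0)) 0 :=
      (((d2.const_mul 1).add ((hasDerivAt_id 0).mul d3)).mul d1).sub
        (((hasDerivAt_id 0).mul d2).mul d2)
    have dden : HasDerivAt (fun z => (F1 z)^2) ((2:ℕ) * F1 0 ^ 1 * F2 0) 0 := d1.pow 2
    have h := dnum.div dden (by rw [hF10]; norm_num)
    refine h.congr_deriv ?_
    rw [hF10]
    ring
  have hD : iteratedDeriv 2 p 0 = 2 * F3 0 - 2 * (F2 0)^2 := by rw [hIter, dG.deriv]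
  have hcara := cara2 p hdp hrep
  have hre0 : (p 0).re = 1 - α := by
    simp [hp, hF10]
  rw [hD, hre0] at hcara
  have ha2 : a 2 = F2 0 / 2 := by
    rw [ha 2, hi2]; norm_num
  have ha3 : a 3 = F3 0 / 6 := by
    rw [ha 3, hi3]; norm_num [Nat.factorial]
  have key : a 3 - (2/3 : ℂ) * a 2 ^ 2 = (2 * F3 0 - 2 * (F2 0)^2) / 12 := by
    rw [ha2, ha3]; ring
  rw [key, norm_div]
  have h12 : ‖(12:ℂ)‖ = 12 := by norm_num
  rw [h12]
  rw [div_le_div_iff₀ (by norm_num) (by norm_num)]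
  nlinarith [hcara]
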